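/- Let K > 0, γ ≥ 1, P(z) := K z^γ, and H(ζ, ξ) := ζ ∫_ξ^ζ (P(z) − P(ξ))/z² dz for ζ, ξ > 0. Let 0 < ρ_* < ρ^* < ∞. Then there exists a constant C > 0, depending only on ρ_*, ρ^*, γ, K, such that for all ζ, ξ with ρ_* ≤ ζ ≤ ρ^* and ρ_* ≤ ξ ≤ ρ^*, one has C^{−1} (ζ − ξ)² ≤ H(ζ, ξ) ≤ C (ζ − ξ)². -/

import Mathlib

open Set


lemma rpow_diff_bounds {γ ρl ρh x y : ℝ} (hγ : 1 ≤ γ) (h0 : 0 < ρl)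
    (hx : ρl ≤ x) (hxy : x ≤ y) (hy : y ≤ ρh) :
    γ * ρl ^ (γ - 1) * (y - x) ≤ y ^ γ - x ^ γ ∧
    y ^ γ - x ^ γ ≤ γ * ρh ^ (γ - 1) * (y - x) := by
  rcases eq_or_lt_of_le hxy with rfl | hlt
  · simp
  · obtain ⟨c, hc, hderiv⟩ := exists_hasDerivAt_eq_slope (fun z => z ^ γ)
      (fun z => γ * z ^ (γ - 1)) hlt
      (fun z _ => (Real.hasDerivAt_rpow_const (p := γ) (Or.inr hγ)).continuousAt.continuousWithinAt)
      (fun z _ => Real.hasDerivAt_rpow_const (Or.inr hγ))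
    have hyx : (0:ℝ) < y - x := by linarith
    have heq : y ^ γ - x ^ γ = γ * c ^ (γ - 1) * (y - x) := by
      field_simp at hderiv; linarith [hderiv]
    have hγ0 : (0:ℝ) ≤ γ := by linarith
    have hγ1 : (0:ℝ) ≤ γ - 1 := by linarith
    have hcl : ρl ^ (γ - 1) ≤ c ^ (γ - 1) :=
      Real.rpow_le_rpow h0.le (by linarith [hc.1]) hγ1
    have hch : c ^ (γ - 1) ≤ ρh ^ (γ - 1) :=
      Real.rpow_le_rpow (by linarith [hc.1]) (by linarith [hc.2]) hγ1
    constructor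
    · rw [heq]
      have := mul_le_mul_of_nonneg_left (mul_le_mul_of_nonneg_right hcl hyx.le) hγ0
      linarith [this]
    · rw [heq]
      have := mul_le_mul_of_nonneg_left (mul_le_mul_of_nonneg_right hch hyx.le) hγ0
      linarith [this]

lemma integral_linear (c w u v : ℝ) :
    ∫ z in u..v, c * (z - w) = c * ((v - w) ^ 2 - (u - w) ^ 2) / 2 := by
  rw [intervalIntegral.integral_const_mul,
    intervalIntegral.integral_sub intervalIntegral.intervalIntegrable_id
      (intervalIntegrable_const (c := w)),
    integral_id, intervalIntegral.integral_const, smul_eq_mul]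
  ring

/-- The isentropic pressure law `P(z) = K z^γ`. -/
noncomputable def Ppres (K γ : ℝ) (z : ℝ) : ℝ := K * z ^ γ

/-- The potential energy density `H(ζ, ξ) = ζ ∫_ξ^ζ (P(z) − P(ξ))/z² dz`. -/
noncomputable def Hpot (K γ : ℝ) (ζ ξ : ℝ) : ℝ :=
  ζ * ∫ z in ξ..ζ, (Ppres K γ z - Ppres K γ ξ) / z ^ 2

/-- Proposition 3.1. On a compact density range `[ρ_*, ρ^*] ⊆ (0,∞)`,
the potential energy density is comparable to the squared difference:
`C⁻¹ (ζ−ξ)² ≤ H(ζ,ξ) ≤ C (ζ−ξ)²`, with `C` depending only on `ρ_*, ρ^*, γ, K`. -/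
theorem stmt_5 (K γ ρlow ρhigh : ℝ) (hK : 0 < K) (hγ : 1 ≤ γ)
    (h0 : 0 < ρlow) (hlh : ρlow < ρhigh) :
    ∃ C > (0 : ℝ), ∀ ζ ξ : ℝ, ρlow ≤ ζ → ζ ≤ ρhigh → ρlow ≤ ξ → ξ ≤ ρhigh →
      C⁻¹ * (ζ - ξ) ^ 2 ≤ Hpot K γ ζ ξ ∧ Hpot K γ ζ ξ ≤ C * (ζ - ξ) ^ 2 := by
  have hh : 0 < ρhigh := h0.trans hlh
  have hγ0 : (0:ℝ) < γ := by linarith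
  set A : ℝ := K * γ * ρlow ^ (γ - 1) / ρhigh ^ 2 with hA
  set B : ℝ := K * γ * ρhigh ^ (γ - 1) / ρlow ^ 2 with hB
  have hA0 : 0 < A :=
    div_pos (mul_pos (mul_pos hK hγ0) (Real.rpow_pos_of_pos h0 _)) (by positivity)
  have hB0 : 0 < B :=
    div_pos (mul_pos (mul_pos hK hγ0) (Real.rpow_pos_of_pos hh _)) (by positivity)
  refine ⟨ρhigh * B / 2 + (ρlow * A / 2)⁻¹, by positivity, ?_⟩
  set C : ℝ := ρhigh * B / 2 + (ρlow * A / 2)⁻¹ with hC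
  have hC0 : 0 < C := by positivity
  intro ζ ξ hζ1 hζ2 hξ1 hξ2
  have hξ0 : 0 < ξ := h0.trans_le hξ1
  -- integrability of the integrand on any subinterval of [ρlow, ρhigh]
  have hint : ∀ a b : ℝ, ρlow ≤ a → a ≤ ρhigh → ρlow ≤ b → b ≤ ρhigh →
      IntervalIntegrable (fun z => (Ppres K γ z - Ppres K γ ξ) / z ^ 2) MeasureTheory.volume a b := by
    intro a b ha1 ha2 hb1 hb2
    apply ContinuousOn.intervalIntegrable
    have hsub : uIcc a b ⊆ Icc ρlow ρhigh := uIcc_subset_Icc ⟨ha1, ha2⟩ ⟨hb1, hb2⟩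
    apply ContinuousOn.div
    · apply ContinuousOn.sub _ continuousOn_const
      intro z hz
      have hz0 : z ≠ 0 := ne_of_gt (h0.trans_le (hsub hz).1)
      exact (ContinuousAt.continuousWithinAt
        (continuousAt_const.mul (Real.continuousAt_rpow_const z γ (Or.inl hz0))))
    · exact (continuous_pow 2).continuousOn
    · intro z hz
      exact pow_ne_zero 2 (ne_of_gt (h0.trans_le (hsub hz).1))
  have hIint := hint ξ ζ hξ1 hξ2 hζ1 hζ2
  set I : ℝ := ∫ z in ξ..ζ, (Ppres K γ z - Ppres K γ ξ) / z ^ 2 with hI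
  have key : A * (ζ - ξ) ^ 2 / 2 ≤ I ∧ I ≤ B * (ζ - ξ) ^ 2 / 2 := by
    rcases le_total ξ ζ with hle | hle
    · -- case ξ ≤ ζ
      have hptlow : ∀ z ∈ Icc ξ ζ, A * (z - ξ) ≤ (Ppres K γ z - Ppres K γ ξ) / z ^ 2 := by
        intro z hz
        have hz1 : ρlow ≤ z := hξ1.trans hz.1
        have hz2 : z ≤ ρhigh := hz.2.trans hζ2
        have hzpos : 0 < z := h0.trans_le hz1
        obtain ⟨k1, k2⟩ := rpow_diff_bounds hγ h0 hξ1 hz.1 hz2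
        rw [le_div_iff₀ (by positivity : (0:ℝ) < z ^ 2)]
        have hz2h : z ^ 2 ≤ ρhigh ^ 2 := pow_le_pow_left₀ hzpos.le hz2 2
        have hnn : 0 ≤ A * (z - ξ) := mul_nonneg hA0.le (by linarith [hz.1])
        calc A * (z - ξ) * z ^ 2 ≤ A * (z - ξ) * ρhigh ^ 2 :=
              mul_le_mul_of_nonneg_left hz2h hnn
          _ = K * (γ * ρlow ^ (γ - 1) * (z - ξ)) := by
              rw [hA]; field_simp
          _ ≤ K * (z ^ γ - ξ ^ γ) := mul_le_mul_of_nonneg_left k1 hK.le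
          _ = Ppres K γ z - Ppres K γ ξ := by simp [Ppres]; ring
      have hptup : ∀ z ∈ Icc ξ ζ, (Ppres K γ z - Ppres K γ ξ) / z ^ 2 ≤ B * (z - ξ) := by
        intro z hz
        have hz1 : ρlow ≤ z := hξ1.trans hz.1
        have hz2 : z ≤ ρhigh := hz.2.trans hζ2
        have hzpos : 0 < z := h0.trans_le hz1
        obtain ⟨k1, k2⟩ := rpow_diff_bounds hγ h0 hξ1 hz.1 hz2
        rw [div_le_iff₀ (by positivity : (0:ℝ) < z ^ 2)]
        have hz2l : ρlow ^ 2 ≤ z ^ 2 := pow_le_pow_left₀ h0.le hz1 2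
        have hnn : 0 ≤ B * (z - ξ) := mul_nonneg hB0.le (by linarith [hz.1])
        calc Ppres K γ z - Ppres K γ ξ = K * (z ^ γ - ξ ^ γ) := by simp [Ppres]; ring
          _ ≤ K * (γ * ρhigh ^ (γ - 1) * (z - ξ)) := mul_le_mul_of_nonneg_left k2 hK.le
          _ = B * (z - ξ) * ρlow ^ 2 := by rw [hB]; field_simp
          _ ≤ B * (z - ξ) * z ^ 2 := mul_le_mul_of_nonneg_left hz2l hnn
      have hlin1 : IntervalIntegrable (fun z => A * (z - ξ)) MeasureTheory.volume ξ ζ :=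
        (Continuous.intervalIntegrable (continuous_const.mul (continuous_id.sub continuous_const)) _ _)
      have hlin2 : IntervalIntegrable (fun z => B * (z - ξ)) MeasureTheory.volume ξ ζ :=
        (Continuous.intervalIntegrable (continuous_const.mul (continuous_id.sub continuous_const)) _ _)
      have h1 := intervalIntegral.integral_mono_on hle hlin1 hIint hptlow
      have h2 := intervalIntegral.integral_mono_on hle hIint hlin2 hptup
      rw [integral_linear] at h1 h2
      constructor
      · calc A * (ζ - ξ) ^ 2 / 2 = A * ((ζ - ξ) ^ 2 - (ξ - ξ) ^ 2) / 2 := by ring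
          _ ≤ I := h1
      · calc I ≤ B * ((ζ - ξ) ^ 2 - (ξ - ξ) ^ 2) / 2 := h2
          _ = B * (ζ - ξ) ^ 2 / 2 := by ring
    · -- case ζ ≤ ξ
      have hptlow : ∀ z ∈ Icc ζ ξ, B * (z - ξ) ≤ (Ppres K γ z - Ppres K γ ξ) / z ^ 2 := by
        intro z hz
        have hz1 : ρlow ≤ z := hζ1.trans hz.1
        have hz2 : z ≤ ρhigh := hz.2.trans hξ2
        have hzpos : 0 < z := h0.trans_le hz1
        obtain ⟨k1, k2⟩ := rpow_diff_bounds hγ h0 hz1 hz.2 hξ2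
        rw [le_div_iff₀ (by positivity : (0:ℝ) < z ^ 2)]
        have hz2l : ρlow ^ 2 ≤ z ^ 2 := pow_le_pow_left₀ h0.le hz1 2
        have hnn : 0 ≤ B * (ξ - z) := mul_nonneg hB0.le (by linarith [hz.2])
        have s1 : K * (ξ ^ γ - z ^ γ) ≤ K * (γ * ρhigh ^ (γ - 1) * (ξ - z)) :=
          mul_le_mul_of_nonneg_left k2 hK.le
        have s2 : K * (γ * ρhigh ^ (γ - 1) * (ξ - z)) = B * (ξ - z) * ρlow ^ 2 := by
          rw [hB]; field_simp
        have s3 : B * (ξ - z) * ρlow ^ 2 ≤ B * (ξ - z) * z ^ 2 :=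
          mul_le_mul_of_nonneg_left hz2l hnn
        have hgoal : B * (z - ξ) * z ^ 2 = -(B * (ξ - z) * z ^ 2) := by ring
        have hp : Ppres K γ z - Ppres K γ ξ = K * z ^ γ - K * ξ ^ γ := by simp [Ppres]
        rw [hgoal, hp]; linarith
      have hptup : ∀ z ∈ Icc ζ ξ, (Ppres K γ z - Ppres K γ ξ) / z ^ 2 ≤ A * (z - ξ) := by
        intro z hz
        have hz1 : ρlow ≤ z := hζ1.trans hz.1
        have hz2 : z ≤ ρhigh := hz.2.trans hξ2
        have hzpos : 0 < z := h0.trans_le hz1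
        obtain ⟨k1, k2⟩ := rpow_diff_bounds hγ h0 hz1 hz.2 hξ2
        rw [div_le_iff₀ (by positivity : (0:ℝ) < z ^ 2)]
        have hz2h : z ^ 2 ≤ ρhigh ^ 2 := pow_le_pow_left₀ hzpos.le hz2 2
        have hnp : A * (z - ξ) ≤ 0 := mul_nonpos_of_nonneg_of_nonpos hA0.le (by linarith [hz.2])
        have s1 : K * (γ * ρlow ^ (γ - 1) * (ξ - z)) ≤ K * (ξ ^ γ - z ^ γ) :=
          mul_le_mul_of_nonneg_left k1 hK.le
        have s2 : K * (γ * ρlow ^ (γ - 1) * (ξ - z)) = -(A * (z - ξ) * ρhigh ^ 2) := by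
          rw [hA]; field_simp; ring
        have s3 : A * (z - ξ) * ρhigh ^ 2 ≤ A * (z - ξ) * z ^ 2 :=
          mul_le_mul_of_nonpos_left hz2h hnp
        have hp : Ppres K γ z - Ppres K γ ξ = K * z ^ γ - K * ξ ^ γ := by simp [Ppres]
        rw [hp]; linarith
      have hlin1 : IntervalIntegrable (fun z => B * (z - ξ)) MeasureTheory.volume ζ ξ :=
        (Continuous.intervalIntegrable (continuous_const.mul (continuous_id.sub continuous_const)) _ _)
      have hlin2 : IntervalIntegrable (fun z => A * (z - ξ)) MeasureTheory.volume ζ ξ :=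
        (Continuous.intervalIntegrable (continuous_const.mul (continuous_id.sub continuous_const)) _ _)
      have hIint' := (hint ζ ξ hζ1 hζ2 hξ1 hξ2)
      have h1 := intervalIntegral.integral_mono_on hle hlin1 hIint' hptlow
      have h2 := intervalIntegral.integral_mono_on hle hIint' hlin2 hptup
      rw [integral_linear] at h1 h2
      have hsym : I = -(∫ z in ζ..ξ, (Ppres K γ z - Ppres K γ ξ) / z ^ 2) := by
        rw [hI, intervalIntegral.integral_symm]
      constructor
      · rw [hsym]
        have : ∫ z in ζ..ξ, (Ppres K γ z - Ppres K γ ξ) / z ^ 2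
            ≤ A * ((ξ - ξ) ^ 2 - (ζ - ξ) ^ 2) / 2 := h2
        linarith [this]
      · rw [hsym]
        have : B * ((ξ - ξ) ^ 2 - (ζ - ξ) ^ 2) / 2
            ≤ ∫ z in ζ..ξ, (Ppres K γ z - Ppres K γ ξ) / z ^ 2 := h1
        linarith [this]
  obtain ⟨h1, h2⟩ := key
  have hInn : 0 ≤ I := le_trans (by positivity) h1
  have hHpot : Hpot K γ ζ ξ = ζ * I := rfl
  have hCinv : C⁻¹ ≤ ρlow * A / 2 := by
    have hb : (ρlow * A / 2)⁻¹ ≤ C := by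
      rw [hC]
      have : 0 < ρhigh * B / 2 := by positivity
      linarith
    have := inv_anti₀ (by positivity : (0:ℝ) < (ρlow * A / 2)⁻¹) hb
    rwa [inv_inv] at this
  constructor
  · rw [hHpot]
    calc C⁻¹ * (ζ - ξ) ^ 2 ≤ (ρlow * A / 2) * (ζ - ξ) ^ 2 :=
          mul_le_mul_of_nonneg_right hCinv (sq_nonneg _)
      _ = ρlow * (A * (ζ - ξ) ^ 2 / 2) := by ring
      _ ≤ ζ * I := mul_le_mul hζ1 h1 (by positivity) (h0.le.trans hζ1)
  · rw [hHpot]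
    calc ζ * I ≤ ρhigh * (B * (ζ - ξ) ^ 2 / 2) :=
          mul_le_mul hζ2 h2 hInn hh.le
      _ = (ρhigh * B / 2) * (ζ - ξ) ^ 2 := by ring
      _ ≤ C * (ζ - ξ) ^ 2 := by
          apply mul_le_mul_of_nonneg_right _ (sq_nonneg _)
          rw [hC]
          have : 0 < (ρlow * A / 2)⁻¹ := by positivity
          linarith
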